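/- Under the CFL condition λL ≤ 1, where L is a uniform Lipschitz constant for u ↦ A(u,x) on [-M,M], the update map H_j(u,v,w) := v - λ(Ā(v,w,x_j,x_{j+1}) - Ā(u,v,x_{j-1},x_j)) is nondecreasing in each of its three arguments u, v, w on [-M,M]³. -/

import Mathlib

/-- The Godunov interface flux of Adimurthi–Jaffré–Gowda. -/
noncomputable def Abar (A : ℝ → ℝ → ℝ) (uM : ℝ → ℝ) (u v x y : ℝ) : ℝ :=
  max (A (max u (uM x)) x) (A (min v (uM y)) y)

theorem scheme_update_monotone
    (A : ℝ → ℝ → ℝ) (uM : ℝ → ℝ) (M L lam : ℝ) (xm x xp : ℝ)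
    (hA0 : ∀ y, A (uM y) y = 0)
    (hdec : ∀ y, AntitoneOn (fun u => A u y) (Set.Iic (uM y)))
    (hinc : ∀ y, MonotoneOn (fun u => A u y) (Set.Ici (uM y)))
    (hLip : ∀ u₁ u₂ y, u₁ ∈ Set.Icc (-M) M → u₂ ∈ Set.Icc (-M) M →
      |A u₁ y - A u₂ y| ≤ L * |u₁ - u₂|)
    (huM : ∀ y, uM y ∈ Set.Icc (-M) M)
    (hlam : 0 < lam) (hCFL : lam * L ≤ 1) :
    let H : ℝ → ℝ → ℝ → ℝ := fun u v w =>
      v - lam * (Abar A uM v w x xp - Abar A uM u v xm x)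
    (∀ u₁ u₂ v w, u₁ ∈ Set.Icc (-M) M → u₂ ∈ Set.Icc (-M) M →
        v ∈ Set.Icc (-M) M → w ∈ Set.Icc (-M) M →
        u₁ ≤ u₂ → H u₁ v w ≤ H u₂ v w) ∧
    (∀ u v₁ v₂ w, u ∈ Set.Icc (-M) M → v₁ ∈ Set.Icc (-M) M →
        v₂ ∈ Set.Icc (-M) M → w ∈ Set.Icc (-M) M →
        v₁ ≤ v₂ → H u v₁ w ≤ H u v₂ w) ∧
    (∀ u v w₁ w₂, u ∈ Set.Icc (-M) M → v ∈ Set.Icc (-M) M →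
        w₁ ∈ Set.Icc (-M) M → w₂ ∈ Set.Icc (-M) M →
        w₁ ≤ w₂ → H u v w₁ ≤ H u v w₂) := by
  intro H
  refine ⟨?_, ?_, ?_⟩
  · -- monotone in u
    intro u₁ u₂ v w _ _ _ _ h12
    show v - lam * (Abar A uM v w x xp - Abar A uM u₁ v xm x) ≤
      v - lam * (Abar A uM v w x xp - Abar A uM u₂ v xm x)
    have hA : A (max u₁ (uM xm)) xm ≤ A (max u₂ (uM xm)) xm :=
      hinc xm (Set.mem_Ici.mpr (le_max_right _ _)) (Set.mem_Ici.mpr (le_max_right _ _)) (max_le_max h12 le_rfl)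
    have h : Abar A uM u₁ v xm x ≤ Abar A uM u₂ v xm x := by
      unfold Abar; exact max_le_max hA le_rfl
    nlinarith
  · -- monotone in v
    intro u v₁ v₂ w _ hv1 hv2 _ h12
    show v₁ - lam * (Abar A uM v₁ w x xp - Abar A uM u v₁ xm x) ≤
      v₂ - lam * (Abar A uM v₂ w x xp - Abar A uM u v₂ xm x)
    set m := uM x with hm
    have hmM := huM x
    have hmax1 : max v₁ m ∈ Set.Icc (-M) M :=
      ⟨le_max_of_le_left hv1.1, max_le hv1.2 hmM.2⟩
    have hmax2 : max v₂ m ∈ Set.Icc (-M) M :=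
      ⟨le_max_of_le_left hv2.1, max_le hv2.2 hmM.2⟩
    have hmin1 : min v₁ m ∈ Set.Icc (-M) M :=
      ⟨le_min hv1.1 hmM.1, min_le_of_left_le hv1.2⟩
    have hmin2 : min v₂ m ∈ Set.Icc (-M) M :=
      ⟨le_min hv2.1 hmM.1, min_le_of_left_le hv2.2⟩
    set a₁ := A (max v₁ m) x
    set a₂ := A (max v₂ m) x
    set b₁ := A (min v₁ m) x
    set b₂ := A (min v₂ m) x
    set c := A (min w (uM xp)) xp
    set d := A (max u (uM xm)) xm
    have hmaxle : max v₁ m ≤ max v₂ m := max_le_max h12 le_rfl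
    have hminle : min v₁ m ≤ min v₂ m := min_le_min h12 le_rfl
    have ha12 : a₁ ≤ a₂ := hinc x (Set.mem_Ici.mpr (le_max_right _ _)) (Set.mem_Ici.mpr (le_max_right _ _)) hmaxle
    have hb21 : b₂ ≤ b₁ := hdec x (Set.mem_Iic.mpr (min_le_right _ _)) (Set.mem_Iic.mpr (min_le_right _ _)) hminle
    have haL : a₂ - a₁ ≤ L * (max v₂ m - max v₁ m) := by
      have := hLip (max v₂ m) (max v₁ m) x hmax2 hmax1
      rw [abs_of_nonneg (by linarith : (0:ℝ) ≤ max v₂ m - max v₁ m)] at this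
      calc a₂ - a₁ ≤ |a₂ - a₁| := le_abs_self _
        _ ≤ L * (max v₂ m - max v₁ m) := this
    have hbL : b₁ - b₂ ≤ L * (min v₂ m - min v₁ m) := by
      have h := hLip (min v₂ m) (min v₁ m) x hmin2 hmin1
      rw [abs_of_nonneg (by linarith : (0:ℝ) ≤ min v₂ m - min v₁ m)] at h
      calc b₁ - b₂ ≤ |b₁ - b₂| := le_abs_self _
        _ = |A (min v₂ m) x - A (min v₁ m) x| := abs_sub_comm _ _
        _ ≤ L * (min v₂ m - min v₁ m) := h
    -- contractions of max
    have h1 : max a₂ c - max a₁ c ≤ a₂ - a₁ := by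
      rcases le_total a₂ c with h | h
      · simp [max_eq_right h, max_eq_right (ha12.trans h)]; linarith
      · rw [max_eq_left h]
        have : a₁ ≤ max a₁ c := le_max_left _ _
        linarith
    have h2 : max d b₁ - max d b₂ ≤ b₁ - b₂ := by
      rcases le_total b₁ d with h | h
      · simp [max_eq_left h, max_eq_left (hb21.trans h)]; linarith
      · rw [max_eq_right h]
        have : b₂ ≤ max d b₂ := le_max_right _ _
        linarith
    have hkey : max v₂ m - max v₁ m + (min v₂ m - min v₁ m) = v₂ - v₁ := by
      have k1 := max_add_min v₁ m
      have k2 := max_add_min v₂ m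
      linarith
    -- also monotone directions
    have h1' : max a₁ c ≤ max a₂ c := max_le_max ha12 le_rfl
    have h2' : max d b₂ ≤ max d b₁ := max_le_max le_rfl hb21
    have hL1 : lam * (max a₂ c - max a₁ c) ≤ lam * (L * (max v₂ m - max v₁ m)) :=
      mul_le_mul_of_nonneg_left (h1.trans haL) hlam.le
    have hL2 : lam * (max d b₁ - max d b₂) ≤ lam * (L * (min v₂ m - min v₁ m)) :=
      mul_le_mul_of_nonneg_left (h2.trans hbL) hlam.le
    have hfin : lam * L * (v₂ - v₁) ≤ 1 * (v₂ - v₁) :=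
      mul_le_mul_of_nonneg_right hCFL (by linarith)
    show v₁ - lam * (max a₁ c - max d b₁) ≤ v₂ - lam * (max a₂ c - max d b₂)
    nlinarith [hL1, hL2, hfin, hkey]
  · -- monotone in w
    intro u v w₁ w₂ _ _ _ _ h12
    show v - lam * (Abar A uM v w₁ x xp - Abar A uM u v xm x) ≤
      v - lam * (Abar A uM v w₂ x xp - Abar A uM u v xm x)
    have hA : A (min w₂ (uM xp)) xp ≤ A (min w₁ (uM xp)) xp :=
      hdec xp (Set.mem_Iic.mpr (min_le_right _ _)) (Set.mem_Iic.mpr (min_le_right _ _)) (min_le_min h12 le_rfl)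
    have h : Abar A uM v w₂ x xp ≤ Abar A uM v w₁ x xp := by
      unfold Abar; exact max_le_max le_rfl hA
    nlinarith
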